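/- arXiv:2404.11893 — 6 statements merged into one kernel-verified Lean document; each statement's English description precedes it below -/
import Mathlib

section
/- Let F : ℝ^d → ℝ be differentiable with L-Lipschitz gradient, let ν > 0 and θ > 0, and fix x ∈ ℝ^d. Let G : Ω → ℝ^d be a square-integrable random vector on a probability space with E[G] = ∇^{FD}F(x) and E‖G − ∇^{FD}F(x)‖² ≤ θ²·‖∇^{FD}F(x)‖². If the step size satisfies 0 < α ≤ 1/(4(1 + θ²)L), then E[F(x − α·G)] ≤ F(x) − (α/4)·‖∇F(x)‖² + (3·α·L²·ν²·d)/16. -/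
open MeasureTheory RealInnerProductSpace

/-- The forward finite-difference gradient estimator
`∇^{FD}F(x) := ∑ⱼ ((F(x + ν eⱼ) − F(x))/ν) eⱼ`. -/
noncomputable def fdGrad {d : ℕ} (F : EuclideanSpace ℝ (Fin d) → ℝ) (ν : ℝ)
    (x : EuclideanSpace ℝ (Fin d)) : EuclideanSpace ℝ (Fin d) :=
  ∑ j, ((F (x + ν • EuclideanSpace.single j (1 : ℝ)) - F x) / ν) •
    EuclideanSpace.single j (1 : ℝ)

lemma quad_bound {E : Type*} [NormedAddCommGroup E] [InnerProductSpace ℝ E] [CompleteSpace E]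
    (F : E → ℝ) (L : ℝ) (hL : 0 ≤ L)
    (hF : Differentiable ℝ F)
    (hLip : ∀ x y, ‖gradient F x - gradient F y‖ ≤ L * ‖x - y‖)
    (x y : E) :
    |F y - F x - ⟪gradient F x, y - x⟫| ≤ L / 2 * ‖y - x‖ ^ 2 := by
  set v := y - x with hv
  have hcont : Continuous (gradient F) := by
    refine (LipschitzWith.of_dist_le_mul (K := L.toNNReal) ?_).continuous
    intro a b
    rw [dist_eq_norm, dist_eq_norm, Real.coe_toNNReal L hL]
    exact hLip a b
  have hderiv : ∀ t : ℝ, HasDerivAt (fun t : ℝ => F (x + t • v))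
      ⟪gradient F (x + t • v), v⟫ t := by
    intro t
    have hline : HasDerivAt (fun t : ℝ => x + t • v) v t := by
      simpa using ((hasDerivAt_id t).smul_const v).const_add x
    have hgrad := (hF (x + t • v)).hasGradientAt
    have := hgrad.hasFDerivAt.comp_hasDerivAt t hline
    simpa [InnerProductSpace.toDual_apply_apply, Function.comp_def] using this
  have hicont : Continuous fun t : ℝ => ⟪gradient F (x + t • v), v⟫ := by
    exact (hcont.comp (by continuity)).inner continuous_const
  have hFTC : F y - F x = ∫ t in (0:ℝ)..1, ⟪gradient F (x + t • v), v⟫ := by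
    have := intervalIntegral.integral_eq_sub_of_hasDerivAt
      (f := fun t : ℝ => F (x + t • v)) (a := (0:ℝ)) (b := 1)
      (fun t _ => hderiv t) (hicont.intervalIntegrable 0 1)
    simp only [one_smul, zero_smul, add_zero] at this
    rw [this]
    congr 1 <;> simp [hv]
  have hconst : ⟪gradient F x, v⟫ = ∫ t in (0:ℝ)..1, ⟪gradient F x, v⟫ := by simp
  have key : F y - F x - ⟪gradient F x, v⟫
      = ∫ t in (0:ℝ)..1, ⟪gradient F (x + t • v) - gradient F x, v⟫ := by
    rw [hFTC, hconst, ← intervalIntegral.integral_sub (hicont.intervalIntegrable 0 1)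
      (intervalIntegrable_const)]
    congr 1; ext t; rw [inner_sub_left]
  rw [key]
  calc |∫ t in (0:ℝ)..1, ⟪gradient F (x + t • v) - gradient F x, v⟫|
      ≤ ∫ t in (0:ℝ)..1, |⟪gradient F (x + t • v) - gradient F x, v⟫| :=
        intervalIntegral.abs_integral_le_integral_abs zero_le_one
    _ ≤ ∫ t in (0:ℝ)..1, L * ‖v‖ ^ 2 * t := by
        apply intervalIntegral.integral_mono_on zero_le_one
        · have hc2 : Continuous fun t : ℝ => ⟪gradient F (x + t • v) - gradient F x, v⟫ :=
            ((hcont.comp (by continuity)).sub continuous_const).inner continuous_const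
          exact hc2.abs.intervalIntegrable 0 1
        · exact (by fun_prop : Continuous fun t : ℝ => L * ‖v‖ ^ 2 * t).intervalIntegrable 0 1
        · intro t ht
          have h1 : |⟪gradient F (x + t • v) - gradient F x, v⟫|
              ≤ ‖gradient F (x + t • v) - gradient F x‖ * ‖v‖ := abs_real_inner_le_norm _ _
          have h2 : ‖gradient F (x + t • v) - gradient F x‖ ≤ L * (t * ‖v‖) := by
            have := hLip (x + t • v) x
            simpa [norm_smul, abs_of_nonneg ht.1] using this
          calc |⟪gradient F (x + t • v) - gradient F x, v⟫|
              ≤ ‖gradient F (x + t • v) - gradient F x‖ * ‖v‖ := h1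
            _ ≤ L * (t * ‖v‖) * ‖v‖ := by
                apply mul_le_mul_of_nonneg_right h2 (norm_nonneg _)
            _ = L * ‖v‖ ^ 2 * t := by ring
    _ = L / 2 * ‖v‖ ^ 2 := by
        rw [intervalIntegral.integral_const_mul, integral_id]
        ring

lemma fdGrad_apply {d : ℕ} (F : EuclideanSpace ℝ (Fin d) → ℝ) (ν : ℝ)
    (x : EuclideanSpace ℝ (Fin d)) (j : Fin d) :
    fdGrad F ν x j = (F (x + ν • EuclideanSpace.single j (1 : ℝ)) - F x) / ν := by
  unfold fdGrad
  rw [show ((∑ i, ((F (x + ν • EuclideanSpace.single i (1 : ℝ)) - F x) / ν) •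
      EuclideanSpace.single i (1 : ℝ)) : EuclideanSpace ℝ (Fin d)) j
    = ∑ i, (((F (x + ν • EuclideanSpace.single i (1 : ℝ)) - F x) / ν) •
      (EuclideanSpace.single i (1 : ℝ) : EuclideanSpace ℝ (Fin d))) j from
      by rw [WithLp.ofLp_sum]; exact Finset.sum_apply j _ _]
  simp [EuclideanSpace.single_apply]

lemma norm_sq_euclid {d : ℕ} (w : EuclideanSpace ℝ (Fin d)) :
    ‖w‖ ^ 2 = ∑ j, (w j) ^ 2 := by
  rw [EuclideanSpace.norm_eq, Real.sq_sqrt (by positivity)]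
  simp [sq_abs]

lemma fd_err {d : ℕ} (F : EuclideanSpace ℝ (Fin d) → ℝ) (L ν : ℝ) (hL : 0 ≤ L)
    (hF : Differentiable ℝ F)
    (hLip : ∀ x y, ‖gradient F x - gradient F y‖ ≤ L * ‖x - y‖)
    (hν : 0 < ν) (x : EuclideanSpace ℝ (Fin d)) :
    ‖fdGrad F ν x - gradient F x‖ ^ 2 ≤ L ^ 2 * ν ^ 2 * d / 4 := by
  rw [norm_sq_euclid]
  have hbound : ∀ j, ((fdGrad F ν x - gradient F x) j) ^ 2 ≤ (L * ν / 2) ^ 2 := by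
    intro j
    have hq := quad_bound F L hL hF hLip x (x + ν • EuclideanSpace.single j (1 : ℝ))
    have hsub : (x + ν • EuclideanSpace.single j (1 : ℝ)) - x
        = ν • (EuclideanSpace.single j (1 : ℝ) : EuclideanSpace ℝ (Fin d)) := by abel
    rw [hsub] at hq
    have hnorm : ‖ν • (EuclideanSpace.single j (1 : ℝ) : EuclideanSpace ℝ (Fin d))‖ = ν := by
      rw [norm_smul, EuclideanSpace.norm_single]
      simp [abs_of_pos hν]
    have hinner : ⟪gradient F x, ν • (EuclideanSpace.single j (1 : ℝ) :
        EuclideanSpace ℝ (Fin d))⟫ = ν * gradient F x j := by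
      rw [real_inner_smul_right, EuclideanSpace.inner_single_right]
      simp
    rw [hnorm, hinner] at hq
    have hj : (fdGrad F ν x - gradient F x) j
        = (F (x + ν • EuclideanSpace.single j (1 : ℝ)) - F x - ν * gradient F x j) / ν := by
      have : (fdGrad F ν x - gradient F x) j = fdGrad F ν x j - gradient F x j := rfl
      rw [this, fdGrad_apply]
      field_simp
    have habs : |(fdGrad F ν x - gradient F x) j| ≤ L * ν / 2 := by
      rw [hj, abs_div, abs_of_pos hν, div_le_iff₀ hν]
      calc |F (x + ν • EuclideanSpace.single j (1 : ℝ)) - F x - ν * gradient F x j|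
          ≤ L / 2 * ν ^ 2 := hq
        _ = L * ν / 2 * ν := by ring
    calc ((fdGrad F ν x - gradient F x) j) ^ 2 = |(fdGrad F ν x - gradient F x) j| ^ 2 := by
          rw [sq_abs]
      _ ≤ (L * ν / 2) ^ 2 := by
          apply pow_le_pow_left₀ (abs_nonneg _) habs
  calc ∑ j, ((fdGrad F ν x - gradient F x) j) ^ 2
      ≤ ∑ _j : Fin d, (L * ν / 2) ^ 2 := Finset.sum_le_sum fun j _ => hbound j
    _ = d * (L * ν / 2) ^ 2 := by simp [mul_comm]
    _ = L ^ 2 * ν ^ 2 * d / 4 := by ring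


set_option maxHeartbeats 1000000 in
/-- If `F` has `L`-Lipschitz gradient, `G` is a square-integrable random
vector with `E[G] = ∇^{FD}F(x)` and `E‖G − ∇^{FD}F(x)‖² ≤ θ² ‖∇^{FD}F(x)‖²`, and
`0 < α ≤ 1/(4(1+θ²)L)`, then
`E[F(x − α G)] ≤ F(x) − (α/4)‖∇F(x)‖² + 3 α L² ν² d / 16`. -/
theorem per_iteration_decrease_FD
    {d : ℕ} {Ω : Type*} {mΩ : MeasurableSpace Ω}
    (P : Measure Ω) [IsProbabilityMeasure P]
    (F : EuclideanSpace ℝ (Fin d) → ℝ) (L ν θ α : ℝ)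
    (hF : Differentiable ℝ F)
    (hLip : ∀ x y, ‖gradient F x - gradient F y‖ ≤ L * ‖x - y‖)
    (hν : 0 < ν) (hθ : 0 < θ)
    (x : EuclideanSpace ℝ (Fin d))
    (G : Ω → EuclideanSpace ℝ (Fin d)) (hG : MemLp G 2 P)
    (hmean : ∫ ω, G ω ∂P = fdGrad F ν x)
    (hvar : ∫ ω, ‖G ω - fdGrad F ν x‖ ^ 2 ∂P ≤ θ ^ 2 * ‖fdGrad F ν x‖ ^ 2)
    (hα0 : 0 < α) (hα : α ≤ 1 / (4 * (1 + θ ^ 2) * L)) :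
    ∫ ω, F (x - α • G ω) ∂P
      ≤ F x - (α / 4) * ‖gradient F x‖ ^ 2 + 3 * α * L ^ 2 * ν ^ 2 * d / 16 := by
  have hθ2 : (0:ℝ) < 1 + θ ^ 2 := by positivity
  have hL : 0 < L := by
    by_contra h
    push_neg at h
    rcases lt_or_eq_of_le h with h' | h'
    · have : 4 * (1 + θ ^ 2) * L < 0 := by nlinarith
      have : 1 / (4 * (1 + θ ^ 2) * L) < 0 := div_neg_of_pos_of_neg one_pos this
      linarith
    · rw [h'] at hα; simp at hα; linarith
  set g := fdGrad F ν x with hgdef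
  set γ := gradient F x with hγdef
  -- integrability facts
  have hGm := hG.aestronglyMeasurable
  have hGi : Integrable G P := hG.integrable (by norm_num)
  have hGn : Integrable (fun ω => ‖G ω‖) P := hGi.norm
  have hGn2 : Integrable (fun ω => ‖G ω‖ ^ 2) P := by
    have h2 := hG.integrable_norm_rpow (by norm_num) (by norm_num)
    have : (2 : ENNReal).toReal = (2:ℝ) := by norm_num
    simp only [this] at h2
    convert h2 using 2 with ω
    rw [← Real.rpow_natCast (‖G ω‖) 2]
    norm_num
  have hinn : Integrable (fun ω => ⟪γ, G ω⟫) P := hGi.const_inner γ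
  -- pointwise quadratic bound
  have hquad := quad_bound F L hL.le hF hLip
  have hstructure : ∀ ω, |F (x - α • G ω) - F x + α * ⟪γ, G ω⟫| ≤ L / 2 * α ^ 2 * ‖G ω‖ ^ 2 := by
    intro ω
    have h := hquad x (x - α • G ω)
    have hsub : (x - α • G ω) - x = -(α • G ω) := by abel
    rw [hsub] at h
    have h1 : ⟪γ, -(α • G ω)⟫ = -(α * ⟪γ, G ω⟫) := by
      rw [inner_neg_right, real_inner_smul_right]
    have h2 : L / 2 * ‖-(α • G ω)‖ ^ 2 = L / 2 * α ^ 2 * ‖G ω‖ ^ 2 := by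
      rw [norm_neg, norm_smul, mul_pow]
      simp [abs_of_pos hα0]
      ring
    rw [h1, h2] at h
    convert h using 2
    ring
  have hptwise : ∀ ω, F (x - α • G ω) ≤ F x - α * ⟪γ, G ω⟫ + L / 2 * α ^ 2 * ‖G ω‖ ^ 2 := by
    intro ω
    have := (abs_le.mp (hstructure ω)).2
    linarith
  -- integrability of F ∘ (x - α G)
  have hFGm : AEStronglyMeasurable (fun ω => F (x - α • G ω)) P :=
    hF.continuous.comp_aestronglyMeasurable (aestronglyMeasurable_const.sub (hGm.const_smul α))
  have hbddint : Integrable (fun ω => |F x| + α * ‖γ‖ * ‖G ω‖ + L / 2 * α ^ 2 * ‖G ω‖ ^ 2) P := by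
    exact ((integrable_const _).add ((hGn.const_mul _))).add (hGn2.const_mul _)
  have hFGi : Integrable (fun ω => F (x - α • G ω)) P := by
    apply hbddint.mono' hFGm
    filter_upwards with ω
    rw [Real.norm_eq_abs]
    have h1 := hstructure ω
    have h2 : |α * ⟪γ, G ω⟫| ≤ α * ‖γ‖ * ‖G ω‖ := by
      rw [abs_mul, abs_of_pos hα0, mul_assoc]
      exact mul_le_mul_of_nonneg_left (abs_real_inner_le_norm _ _) hα0.le
    have := abs_sub_abs_le_abs_sub (F (x - α • G ω)) (F x - α * ⟪γ, G ω⟫)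
    have h3 : |F x - α * ⟪γ, G ω⟫| ≤ |F x| + α * ‖γ‖ * ‖G ω‖ := by
      calc |F x - α * ⟪γ, G ω⟫| ≤ |F x| + |α * ⟪γ, G ω⟫| := abs_sub _ _
        _ ≤ |F x| + α * ‖γ‖ * ‖G ω‖ := by linarith
    have h4 : |F (x - α • G ω) - (F x - α * ⟪γ, G ω⟫)| ≤ L / 2 * α ^ 2 * ‖G ω‖ ^ 2 := by
      convert h1 using 2; ring
    have h5 : |F (x - α • G ω)|
        ≤ |F x - α * ⟪γ, G ω⟫| + |F (x - α • G ω) - (F x - α * ⟪γ, G ω⟫)| := by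
      have := abs_add_le (F x - α * ⟪γ, G ω⟫) (F (x - α • G ω) - (F x - α * ⟪γ, G ω⟫))
      simpa using this
    linarith
  -- step 1: integrate
  have hstep1 : ∫ ω, F (x - α • G ω) ∂P
      ≤ F x - α * ⟪γ, g⟫ + L / 2 * α ^ 2 * ∫ ω, ‖G ω‖ ^ 2 ∂P := by
    have hRHSi : Integrable (fun ω => F x - α * ⟪γ, G ω⟫ + L / 2 * α ^ 2 * ‖G ω‖ ^ 2) P :=
      ((integrable_const _).sub (hinn.const_mul _)).add (hGn2.const_mul _)
    calc ∫ ω, F (x - α • G ω) ∂P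
        ≤ ∫ ω, (F x - α * ⟪γ, G ω⟫ + L / 2 * α ^ 2 * ‖G ω‖ ^ 2) ∂P :=
          integral_mono hFGi hRHSi hptwise
      _ = F x - α * ⟪γ, g⟫ + L / 2 * α ^ 2 * ∫ ω, ‖G ω‖ ^ 2 ∂P := by
          have e1 := integral_add (μ := P) (f := fun ω => F x - α * ⟪γ, G ω⟫)
            (g := fun ω => L / 2 * α ^ 2 * ‖G ω‖ ^ 2)
            ((integrable_const _).sub (hinn.const_mul _)) (hGn2.const_mul _)
          have e2 := integral_sub (μ := P) (f := fun _ : Ω => F x)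
            (g := fun ω => α * ⟪γ, G ω⟫) (integrable_const _) (hinn.const_mul _)
          rw [e1, e2, integral_const, integral_const_mul, integral_const_mul,
            integral_inner hGi, hmean]
          simp
  -- step 2: second moment bound
  have hsm : ∫ ω, ‖G ω‖ ^ 2 ∂P ≤ (1 + θ ^ 2) * ‖g‖ ^ 2 := by
    have hGg : Integrable (fun ω => G ω - g) P := hGi.sub (integrable_const g)
    have hGgn2 : Integrable (fun ω => ‖G ω - g‖ ^ 2) P := by
      have hm : MemLp (fun ω => G ω - g) 2 P := hG.sub (memLp_const g)
      have h2 := hm.integrable_norm_rpow (by norm_num) (by norm_num)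
      have : (2 : ENNReal).toReal = (2:ℝ) := by norm_num
      simp only [this] at h2
      convert h2 using 2 with ω
      rw [← Real.rpow_natCast (‖G ω - g‖) 2]
      norm_num
    have hinn2 : Integrable (fun ω => ⟪g, G ω - g⟫) P := hGg.const_inner g
    have hiz : ∫ ω, ⟪g, G ω - g⟫ ∂P = 0 := by
      rw [integral_inner hGg, integral_sub hGi (integrable_const g), integral_const, hmean]
      simp
    have hexp : ∀ ω, ‖G ω‖ ^ 2 = ‖G ω - g‖ ^ 2 + 2 * ⟪g, G ω - g⟫ + ‖g‖ ^ 2 := by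
      intro ω
      have h := norm_add_sq_real (G ω - g) g
      rw [sub_add_cancel] at h
      rw [h, real_inner_comm]
    calc ∫ ω, ‖G ω‖ ^ 2 ∂P
        = ∫ ω, (‖G ω - g‖ ^ 2 + 2 * ⟪g, G ω - g⟫ + ‖g‖ ^ 2) ∂P := by
          simp_rw [hexp]
      _ = (∫ ω, ‖G ω - g‖ ^ 2 ∂P) + 2 * (∫ ω, ⟪g, G ω - g⟫ ∂P) + ‖g‖ ^ 2 := by
          have e1 := integral_add (μ := P)
            (f := fun ω => ‖G ω - g‖ ^ 2 + 2 * ⟪g, G ω - g⟫) (g := fun _ : Ω => ‖g‖ ^ 2)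
            (hGgn2.add (hinn2.const_mul 2)) (integrable_const _)
          have e2 := integral_add (μ := P) (f := fun ω => ‖G ω - g‖ ^ 2)
            (g := fun ω => 2 * ⟪g, G ω - g⟫) hGgn2 (hinn2.const_mul 2)
          rw [e1, e2, integral_const_mul, integral_const]
          simp
      _ ≤ θ ^ 2 * ‖g‖ ^ 2 + 0 + ‖g‖ ^ 2 := by
          rw [hiz]
          simp only [mul_zero]
          linarith [hvar]
      _ = (1 + θ ^ 2) * ‖g‖ ^ 2 := by ring
  -- step 3: algebra
  set A := ‖γ‖ with hA
  set e := ‖g - γ‖ with he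
  have he2 : e ^ 2 ≤ L ^ 2 * ν ^ 2 * d / 4 := fd_err F L ν hL.le hF hLip hν x
  have hig : A ^ 2 - A * e ≤ ⟪γ, g⟫ := by
    have h1 : ⟪γ, g⟫ = A ^ 2 + ⟪γ, g - γ⟫ := by
      rw [inner_sub_right, real_inner_self_eq_norm_sq]
      ring
    have h2 := (abs_le.mp (abs_real_inner_le_norm γ (g - γ))).1
    rw [h1]
    linarith
  have hng : ‖g‖ ≤ A + e := by
    calc ‖g‖ = ‖γ + (g - γ)‖ := by congr 1; abel
      _ ≤ A + e := norm_add_le _ _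
  have hc : α * ((1 + θ ^ 2) * L) ≤ 1 / 4 := by
    have hd : 0 < 4 * (1 + θ ^ 2) * L := by positivity
    have h1 : α * (4 * (1 + θ ^ 2) * L) ≤ 1 := (le_div_iff₀ hd).mp hα
    have h2 : α * (4 * (1 + θ ^ 2) * L) = 4 * (α * ((1 + θ ^ 2) * L)) := by ring
    linarith
  have hAe : 0 ≤ A := norm_nonneg _
  have hee : 0 ≤ e := norm_nonneg _
  have hg2 : ‖g‖ ^ 2 ≤ (A + e) ^ 2 := pow_le_pow_left₀ (norm_nonneg _) hng 2
  have h8 : L / 2 * α ^ 2 * ((1 + θ ^ 2) * ‖g‖ ^ 2) ≤ α / 8 * (A + e) ^ 2 := by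
    have key : (α * ((1 + θ ^ 2) * L)) * (α * ‖g‖ ^ 2) ≤ (1/4) * (α * (A + e) ^ 2) := by
      apply mul_le_mul hc (mul_le_mul_of_nonneg_left hg2 hα0.le) (by positivity) (by norm_num)
    nlinarith
  have hfinal1 : ∫ ω, F (x - α • G ω) ∂P
      ≤ F x - α * (A ^ 2 - A * e) + α / 8 * (A + e) ^ 2 := by
    have t1 : α * (A ^ 2 - A * e) ≤ α * ⟪γ, g⟫ := mul_le_mul_of_nonneg_left hig hα0.le
    have t2 : L / 2 * α ^ 2 * ∫ ω, ‖G ω‖ ^ 2 ∂P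
        ≤ L / 2 * α ^ 2 * ((1 + θ ^ 2) * ‖g‖ ^ 2) :=
      mul_le_mul_of_nonneg_left hsm (by positivity)
    linarith [hstep1]
  have halg : F x - α * (A ^ 2 - A * e) + α / 8 * (A + e) ^ 2
      ≤ F x - (α / 4) * A ^ 2 + 3 * α * L ^ 2 * ν ^ 2 * d / 16 := by
    nlinarith [mul_nonneg hα0.le (sq_nonneg (A - e)), mul_le_mul_of_nonneg_left he2 hα0.le]
  linarith
end

section
/- Let F : ℝ^d → ℝ be differentiable and μ-strongly convex in the sense that ‖∇F(x)‖² ≥ 2μ·(F(x) − F(x*)) for all x ∈ ℝ^d, where x* is a minimizer of F and μ > 0. Let (Ω, 𝓐, P) be a probability space with a filtration (𝓕_k)_{k≥0}, and let (x_k)_{k≥0} be a sequence of random iterates in ℝ^d with each x_k 𝓕_k-measurable and each F(x_k) and ‖∇F(x_k)‖² integrable. Suppose there are constants a_1, a_2 > 0 with μ·a_1 ≤ 1 such that for every k ≥ 0, E[F(x_{k+1}) | 𝓕_k] ≤ F(x_k) − (a_1/2)·‖∇F(x_k)‖² + a_2 almost surely. Then for every k ≥ 0, E[F(x_k) − F(x*)]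 ≤ (1 − μ·a_1)^k · ( E[F(x_0)] − F(x*) − a_2/(μ·a_1) ) + a_2/(μ·a_1). -/
open MeasureTheory

/-- (Linear convergence lemma.) Let `F` be differentiable and
`μ`-strongly convex in the PL sense `‖∇F(x)‖² ≥ 2μ(F(x) − F(x*))` with minimizer `x*`.
If random iterates `(x_k)` adapted to a filtration `(𝓕_k)` satisfy the per-iteration
expected decrease `E[F(x_{k+1}) | 𝓕_k] ≤ F(x_k) − (a₁/2)‖∇F(x_k)‖² + a₂` a.s.
with `a₁, a₂ > 0`, `μ a₁ ≤ 1`, then for every `k`,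
`E[F(x_k) − F(x*)] ≤ (1 − μ a₁)^k (E[F(x₀)] − F(x*) − a₂/(μ a₁)) + a₂/(μ a₁)`. -/
theorem linear_convergence_in_expectation
    {d : ℕ} {Ω : Type*} {mΩ : MeasurableSpace Ω}
    (P : Measure Ω) [IsProbabilityMeasure P]
    (F : EuclideanSpace ℝ (Fin d) → ℝ) (μ : ℝ) (hμ : 0 < μ)
    (hF : Differentiable ℝ F)
    (xstar : EuclideanSpace ℝ (Fin d)) (hmin : ∀ y, F xstar ≤ F y)
    (hsc : ∀ y, 2 * μ * (F y - F xstar) ≤ ‖gradient F y‖ ^ 2)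
    (ℱ : Filtration ℕ mΩ)
    (x : ℕ → Ω → EuclideanSpace ℝ (Fin d))
    (hadapted : ∀ k, StronglyMeasurable[ℱ k] (x k))
    (hintF : ∀ k, Integrable (fun ω => F (x k ω)) P)
    (hintG : ∀ k, Integrable (fun ω => ‖gradient F (x k ω)‖ ^ 2) P)
    (a₁ a₂ : ℝ) (ha₁ : 0 < a₁) (ha₂ : 0 < a₂) (hμa₁ : μ * a₁ ≤ 1)
    (hdec : ∀ k, (P[(fun ω => F (x (k + 1) ω)) | ℱ k])
        ≤ᵐ[P] fun ω => F (x k ω) - (a₁ / 2) * ‖gradient F (x k ω)‖ ^ 2 + a₂) :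
    ∀ k, ∫ ω, (F (x k ω) - F xstar) ∂P
      ≤ (1 - μ * a₁) ^ k * ((∫ ω, F (x 0 ω) ∂P) - F xstar - a₂ / (μ * a₁))
          + a₂ / (μ * a₁) := by
  have hμa₁pos : 0 < μ * a₁ := mul_pos hμ ha₁
  have hca : a₂ / (μ * a₁) * (μ * a₁) = a₂ := div_mul_cancel₀ _ hμa₁pos.ne'
  have hsub : ∀ k, ∫ ω, (F (x k ω) - F xstar) ∂P
      = (∫ ω, F (x k ω) ∂P) - F xstar := by
    intro k
    rw [integral_sub (hintF k) (integrable_const _), integral_const]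
    simp
  have key : ∀ k, ∫ ω, (F (x (k+1) ω) - F xstar) ∂P
      ≤ (1 - μ * a₁) * (∫ ω, (F (x k ω) - F xstar) ∂P) + a₂ := by
    intro k
    have hb : Integrable (fun ω => F (x k ω) - (a₁ / 2) * ‖gradient F (x k ω)‖ ^ 2) P :=
      (hintF k).sub ((hintG k).const_mul _)
    have hRHSint : Integrable
        (fun ω => F (x k ω) - (a₁ / 2) * ‖gradient F (x k ω)‖ ^ 2 + a₂) P :=
      hb.add (integrable_const _)
    have h1 : ∫ ω, F (x (k+1) ω) ∂P
        ≤ ∫ ω, (F (x k ω) - (a₁ / 2) * ‖gradient F (x k ω)‖ ^ 2 + a₂) ∂P := by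
      rw [← integral_condExp (ℱ.le k) (f := fun ω => F (x (k+1) ω)) (μ := P)]
      exact integral_mono_ae integrable_condExp hRHSint (hdec k)
    have h2 : ∫ ω, (F (x k ω) - (a₁ / 2) * ‖gradient F (x k ω)‖ ^ 2 + a₂) ∂P
        = (∫ ω, F (x k ω) ∂P) - (a₁ / 2) * (∫ ω, ‖gradient F (x k ω)‖ ^ 2 ∂P) + a₂ := by
      rw [integral_add hb (integrable_const _),
        integral_sub (hintF k) ((hintG k).const_mul _), integral_const_mul, integral_const]
      simp
    have hd : Integrable (fun ω => 2 * μ * (F (x k ω) - F xstar)) P :=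
      ((hintF k).sub (integrable_const _)).const_mul _
    have h3 : 2 * μ * (∫ ω, (F (x k ω) - F xstar) ∂P)
        ≤ ∫ ω, ‖gradient F (x k ω)‖ ^ 2 ∂P := by
      rw [← integral_const_mul]
      exact integral_mono hd (hintG k) (fun ω => hsc (x k ω))
    have h4 : (a₁ / 2) * (2 * μ * (∫ ω, (F (x k ω) - F xstar) ∂P))
        ≤ (a₁ / 2) * (∫ ω, ‖gradient F (x k ω)‖ ^ 2 ∂P) :=
      mul_le_mul_of_nonneg_left h3 (by linarith)
    have e1 := hsub k
    have e2 := hsub (k+1)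
    nlinarith [h1, h2, h4]
  intro k
  induction k with
  | zero => rw [hsub 0]; simp
  | succ k ih =>
    have h1mn : 0 ≤ 1 - μ * a₁ := by linarith
    calc ∫ ω, (F (x (k+1) ω) - F xstar) ∂P
        ≤ (1 - μ * a₁) * (∫ ω, (F (x k ω) - F xstar) ∂P) + a₂ := key k
      _ ≤ (1 - μ * a₁) * ((1 - μ * a₁) ^ k * ((∫ ω, F (x 0 ω) ∂P) - F xstar - a₂ / (μ * a₁))
            + a₂ / (μ * a₁)) + a₂ := by
          have := mul_le_mul_of_nonneg_left ih h1mn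
          linarith
      _ = (1 - μ * a₁) ^ (k+1) * ((∫ ω, F (x 0 ω) ∂P) - F xstar - a₂ / (μ * a₁))
            + a₂ / (μ * a₁) := by
          rw [pow_succ]
          nlinarith [hca]
end

section
/- Let F : ℝ^d → ℝ be differentiable and μ-strongly convex in the sense that ‖∇F(x)‖² ≥ 2μ·(F(x) − F(x*)) for all x ∈ ℝ^d, where x* is a minimizer of F and μ > 0. Let (x_k)_{k≥0} be random iterates on a probability space as in the linear-convergence setting: x_k is 𝓕_k-measurable for a filtration (𝓕_k), F(x_k) and ‖∇F(x_k)‖² are integrable, and for constants a_1, a_2 > 0 with μ·a_1 ≤ 1 one has E[F(x_{k+1}) | 𝓕_k] ≤ F(x_k) − (a_1/2)·‖∇F(x_k)‖² + a_2 almost surely for all k. Define z_k := (1 − μ·a_1)^k·( E[F(x_0)] − F(x*) − a_2/(μ·a_1) ) + a_2/(μ·a_1) and assume z_k > 0. Then for every p ∈ (0,1] and every k ≥ 0, with probability at least 1 − p, F(x_k) − F(x*) − a_2/(p·μ·a_1) ≤ ((1 − μ·a_1)^k/p)·( E[F(x_0)] − F(x*) − a_2/(μ·a_1) ). -/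
open MeasureTheory

/-- (Uniform bound with high probability.) In the linear-convergence
setting (strongly convex `F` with minimizer `x*`, adapted integrable iterates with
`E[F(x_{k+1}) | 𝓕_k] ≤ F(x_k) − (a₁/2)‖∇F(x_k)‖² + a₂` a.s., `a₁, a₂ > 0`, `μ a₁ ≤ 1`),
with `z_k := (1 − μ a₁)^k (E[F(x₀)] − F(x*) − a₂/(μ a₁)) + a₂/(μ a₁) > 0`, for every
`p ∈ (0,1]` and every `k`, with probability at least `1 − p` we have
`F(x_k) − F(x*) − a₂/(p μ a₁) ≤ ((1 − μ a₁)^k / p)(E[F(x₀)] − F(x*) − a₂/(μ a₁))`. -/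
theorem high_probability_bound
    {d : ℕ} {Ω : Type*} {mΩ : MeasurableSpace Ω}
    (P : Measure Ω) [IsProbabilityMeasure P]
    (F : EuclideanSpace ℝ (Fin d) → ℝ) (μ : ℝ) (hμ : 0 < μ)
    (hF : Differentiable ℝ F)
    (xstar : EuclideanSpace ℝ (Fin d)) (hmin : ∀ y, F xstar ≤ F y)
    (hsc : ∀ y, 2 * μ * (F y - F xstar) ≤ ‖gradient F y‖ ^ 2)
    (ℱ : Filtration ℕ mΩ)
    (x : ℕ → Ω → EuclideanSpace ℝ (Fin d))
    (hadapted : ∀ k, StronglyMeasurable[ℱ k] (x k))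
    (hintF : ∀ k, Integrable (fun ω => F (x k ω)) P)
    (hintG : ∀ k, Integrable (fun ω => ‖gradient F (x k ω)‖ ^ 2) P)
    (a₁ a₂ : ℝ) (ha₁ : 0 < a₁) (ha₂ : 0 < a₂) (hμa₁ : μ * a₁ ≤ 1)
    (hdec : ∀ k, (P[(fun ω => F (x (k + 1) ω)) | ℱ k])
        ≤ᵐ[P] fun ω => F (x k ω) - (a₁ / 2) * ‖gradient F (x k ω)‖ ^ 2 + a₂)
    (hz : ∀ k : ℕ, 0 < (1 - μ * a₁) ^ k *
        ((∫ ω, F (x 0 ω) ∂P) - F xstar - a₂ / (μ * a₁)) + a₂ / (μ * a₁))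
    (p : ℝ) (hp0 : 0 < p) (hp1 : p ≤ 1) (k : ℕ) :
    ENNReal.ofReal (1 - p) ≤
      P {ω | F (x k ω) - F xstar - a₂ / (p * μ * a₁)
        ≤ ((1 - μ * a₁) ^ k / p) *
            ((∫ ω, F (x 0 ω) ∂P) - F xstar - a₂ / (μ * a₁))} := by
  set B := a₂ / (μ * a₁) with hB
  set C := (∫ ω, F (x 0 ω) ∂P) - F xstar - B with hC
  have hμa₁pos : 0 < μ * a₁ := mul_pos hμ ha₁
  -- Step 1: one-step expected decrease
  have hstep : ∀ n, (∫ ω, F (x (n+1) ω) ∂P) - F xstar ≤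
      (1 - μ * a₁) * ((∫ ω, F (x n ω) ∂P) - F xstar) + a₂ := by
    intro n
    have h1 : (∫ ω, F (x (n+1) ω) ∂P) =
        ∫ ω, (P[(fun ω => F (x (n + 1) ω)) | ℱ n]) ω ∂P :=
      (integral_condExp (ℱ.le n)).symm
    have hint1 : Integrable (fun ω => F (x n ω) - a₁ / 2 * ‖gradient F (x n ω)‖ ^ 2) P :=
      (hintF n).sub ((hintG n).const_mul _)
    have hRHSint : Integrable
        (fun ω => F (x n ω) - a₁ / 2 * ‖gradient F (x n ω)‖ ^ 2 + a₂) P :=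
      hint1.add (integrable_const _)
    have h2 : (∫ ω, (P[(fun ω => F (x (n + 1) ω)) | ℱ n]) ω ∂P) ≤
        ∫ ω, (F (x n ω) - a₁ / 2 * ‖gradient F (x n ω)‖ ^ 2 + a₂) ∂P :=
      integral_mono_ae integrable_condExp hRHSint (hdec n)
    have h3 : (∫ ω, (F (x n ω) - a₁ / 2 * ‖gradient F (x n ω)‖ ^ 2 + a₂) ∂P)
        = (∫ ω, F (x n ω) ∂P) - a₁ / 2 * (∫ ω, ‖gradient F (x n ω)‖ ^ 2 ∂P) + a₂ := by
      rw [integral_add hint1 (integrable_const _),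
        integral_sub (hintF n) ((hintG n).const_mul _), integral_const_mul _,
        integral_const]
      simp
    have hintsub : Integrable (fun ω => F (x n ω) - F xstar) P :=
      (hintF n).sub (integrable_const _)
    have hintscaled : Integrable (fun ω => 2 * μ * (F (x n ω) - F xstar)) P :=
      hintsub.const_mul _
    have h4' : (∫ ω, 2 * μ * (F (x n ω) - F xstar) ∂P) ≤
        ∫ ω, ‖gradient F (x n ω)‖ ^ 2 ∂P :=
      integral_mono hintscaled (hintG n) fun ω => hsc (x n ω)
    have h4'' : (∫ ω, 2 * μ * (F (x n ω) - F xstar) ∂P)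
        = 2 * μ * ((∫ ω, F (x n ω) ∂P) - F xstar) := by
      rw [integral_const_mul _, integral_sub (hintF n) (integrable_const _), integral_const]
      simp
    have h4 : 2 * μ * ((∫ ω, F (x n ω) ∂P) - F xstar) ≤
        ∫ ω, ‖gradient F (x n ω)‖ ^ 2 ∂P := h4''.symm.trans_le h4'
    have ha₁2 : (0:ℝ) ≤ a₁ / 2 := by linarith
    have hmul := mul_le_mul_of_nonneg_left h4 ha₁2
    nlinarith [h1, h2, h3, hmul]
  -- Step 2: E[F(x_k)] - F* ≤ z_k by induction
  have hbound : ∀ n, (∫ ω, F (x n ω) ∂P) - F xstar ≤ (1 - μ * a₁) ^ n * C + B := by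
    intro n
    induction n with
    | zero => simp [hC]
    | succ n ih =>
      have h1 := hstep n
      have hpos : (0:ℝ) ≤ 1 - μ * a₁ := by linarith
      have hBa : μ * a₁ * B = a₂ := by
        rw [hB]
        field_simp
      calc (∫ ω, F (x (n+1) ω) ∂P) - F xstar
          ≤ (1 - μ * a₁) * ((∫ ω, F (x n ω) ∂P) - F xstar) + a₂ := h1
        _ ≤ (1 - μ * a₁) * ((1 - μ * a₁) ^ n * C + B) + a₂ := by
            nlinarith [mul_le_mul_of_nonneg_left ih hpos]
        _ = (1 - μ * a₁) ^ (n+1) * C + B := by linear_combination -hBa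
  -- Step 3: Markov's inequality
  set Y : Ω → ℝ := fun ω => F (x k ω) - F xstar with hY
  have hYnonneg : 0 ≤ᵐ[P] Y := Filter.Eventually.of_forall fun ω => by
    simp [hY, sub_nonneg, hmin]
  have hYint : Integrable Y P := (hintF k).sub (integrable_const _)
  set z := (1 - μ * a₁) ^ k * C + B with hzdef
  have hzpos : 0 < z := hz k
  have hε : 0 < z / p := div_pos hzpos hp0
  have hmarkov := mul_meas_ge_le_integral_of_nonneg hYnonneg hYint (z / p)
  have hEY : (∫ ω, Y ω ∂P) ≤ z := by
    have hYeq : (∫ ω, Y ω ∂P) = (∫ ω, F (x k ω) ∂P) - F xstar := by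
      rw [hY]
      rw [integral_sub (hintF k) (integrable_const _), integral_const]
      simp
    rw [hYeq]
    exact hbound k
  -- measurability of Y
  have hYmeas : Measurable Y := by
    have : Measurable (x k) := ((hadapted k).measurable).mono (ℱ.le k) le_rfl
    exact ((hF.continuous.measurable).comp this).sub measurable_const
  have hAmeas : MeasurableSet {ω | z / p ≤ Y ω} :=
    measurableSet_le measurable_const hYmeas
  have hPA : P {ω | z / p ≤ Y ω} ≤ ENNReal.ofReal p := by
    have hfin : P {ω | z / p ≤ Y ω} ≠ ⊤ := measure_ne_top _ _
    have htoReal : (P {ω | z / p ≤ Y ω}).toReal ≤ p := by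
      have h1 : z / p * (P {ω | z / p ≤ Y ω}).toReal ≤ z := le_trans hmarkov hEY
      have hzz : p * (z / p) = z := by field_simp
      nlinarith [h1, hε, hzz]
    calc P {ω | z / p ≤ Y ω} = ENNReal.ofReal (P {ω | z / p ≤ Y ω}).toReal :=
          (ENNReal.ofReal_toReal hfin).symm
      _ ≤ ENNReal.ofReal p := ENNReal.ofReal_le_ofReal htoReal
  -- complement
  have hsubset : {ω | z / p ≤ Y ω}ᶜ ⊆
      {ω | F (x k ω) - F xstar - a₂ / (p * μ * a₁)
        ≤ ((1 - μ * a₁) ^ k / p) *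
            ((∫ ω, F (x 0 ω) ∂P) - F xstar - a₂ / (μ * a₁))} := by
    intro ω hω
    simp only [Set.mem_compl_iff, Set.mem_setOf_eq, not_le] at hω ⊢
    have hYle : Y ω ≤ z / p := hω.le
    have hrw : z / p = ((1 - μ * a₁) ^ k / p) *
        ((∫ ω, F (x 0 ω) ∂P) - F xstar - a₂ / (μ * a₁)) + a₂ / (p * μ * a₁) := by
      rw [hzdef, hC, hB]
      field_simp
    rw [hrw] at hYle
    simp only [hY] at hYle
    linarith
  have hcompl : ENNReal.ofReal (1 - p) ≤ P ({ω | z / p ≤ Y ω}ᶜ) := by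
    rw [measure_compl hAmeas (measure_ne_top _ _), measure_univ]
    calc ENNReal.ofReal (1 - p) ≤ 1 - ENNReal.ofReal p := by
          rw [ENNReal.ofReal_sub _ hp0.le]
          simp
      _ ≤ 1 - P {ω | z / p ≤ Y ω} :=
          tsub_le_tsub_left hPA 1
  exact le_trans hcompl (measure_mono hsubset)
end

section
/- Let f, F : ℝ^d → ℝ be differentiable, with f having L_f-Lipschitz gradient and F having L_F-Lipschitz gradient where L_F ≤ L_f. Then for every x, u ∈ ℝ^d and every ν > 0, ( (f(x + ν u) − f(x))/ν − (F(x + ν u) − F(x))/ν )² ≤ 2·‖∇f(x) − ∇F(x)‖²·‖u‖² + 2·L_f²·ν²·‖u‖⁴. -/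
open InnerProductSpace intervalIntegral

lemma taylor_quadratic_bound {E : Type*} [NormedAddCommGroup E] [InnerProductSpace ℝ E]
    [CompleteSpace E] (g : E → ℝ) (L : ℝ) (hg : Differentiable ℝ g)
    (hL : ∀ x y, ‖gradient g x - gradient g y‖ ≤ L * ‖x - y‖) (x v : E) :
    |g (x + v) - g x - inner ℝ (gradient g x) v| ≤ L / 2 * ‖v‖ ^ 2 := by
  have hcont : Continuous fun y => gradient g y := by
    refine (LipschitzWith.of_dist_le_mul (K := L.toNNReal) fun a b => ?_).continuous
    rw [dist_eq_norm, dist_eq_norm]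
    refine (hL a b).trans ?_
    have : L ≤ (L.toNNReal : ℝ) := by simp [Real.coe_toNNReal', le_max_left]
    exact mul_le_mul_of_nonneg_right this (norm_nonneg _)
  have hderiv : ∀ t : ℝ, HasDerivAt (fun t : ℝ => g (x + t • v))
      (inner ℝ (gradient g (x + t • v)) v) t := by
    intro t
    have h1 : HasDerivAt (fun t : ℝ => x + t • v) v t := by
      simpa using ((hasDerivAt_id t).smul_const v).const_add x
    have h2 := (hg (x + t • v)).hasGradientAt.hasFDerivAt
    have h3 := h2.comp_hasDerivAt t h1
    simp only [toDual_apply_apply, Function.comp_def] at h3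
    exact h3
  have hcont' : Continuous fun t : ℝ => (inner ℝ (gradient g (x + t • v)) v : ℝ) := by
    exact (continuous_inner.comp ((hcont.comp (by continuity)).prodMk continuous_const))
  have hint := intervalIntegral.integral_eq_sub_of_hasDerivAt (f := fun t : ℝ => g (x + t • v))
    (a := 0) (b := 1) (fun t _ => hderiv t) (hcont'.intervalIntegrable 0 1)
  have heq : g (x + v) - g x - inner ℝ (gradient g x) v
      = ∫ t in (0:ℝ)..1, ((inner ℝ (gradient g (x + t • v)) v : ℝ) - inner ℝ (gradient g x) v) := by
    rw [intervalIntegral.integral_sub (hcont'.intervalIntegrable 0 1)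
      (intervalIntegrable_const)]
    simp at hint
    rw [← hint]
    simp
  rw [heq]
  have hbound : ∀ t ∈ Set.uIoc (0:ℝ) 1,
      ‖(inner ℝ (gradient g (x + t • v)) v : ℝ) - inner ℝ (gradient g x) v‖ ≤ L * ‖v‖ ^ 2 * t := by
    intro t ht
    rw [Set.uIoc_of_le zero_le_one] at ht
    have ht0 : 0 ≤ t := le_of_lt ht.1
    rw [← inner_sub_left]
    calc ‖(inner ℝ (gradient g (x + t • v) - gradient g x) v : ℝ)‖
        ≤ ‖gradient g (x + t • v) - gradient g x‖ * ‖v‖ := norm_inner_le_norm _ _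
      _ ≤ (L * ‖x + t • v - x‖) * ‖v‖ :=
          mul_le_mul_of_nonneg_right (hL _ _) (norm_nonneg _)
      _ = L * ‖v‖ ^ 2 * t := by
          rw [add_sub_cancel_left, norm_smul, Real.norm_eq_abs, abs_of_nonneg ht0]; ring
  have := intervalIntegral.norm_integral_le_of_norm_le (μ := MeasureTheory.volume) (g := fun t => L * ‖v‖ ^ 2 * t) zero_le_one
    (MeasureTheory.ae_of_all _ fun t ht => hbound t (by rwa [Set.uIoc_of_le zero_le_one]))
    (by exact (continuous_const.mul continuous_id).intervalIntegrable 0 1)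
  rw [Real.norm_eq_abs] at this
  have hLv : 0 ≤ L * ‖v‖ ^ 2 := by
    rcases eq_or_ne v 0 with h | h
    · simp [h]
    · have h1 : (0 : ℝ) ≤ L * ‖x - (x + v)‖ := (norm_nonneg _).trans (hL x (x + v))
      have h2 : ‖x - (x + v)‖ = ‖v‖ := by simp
      rw [h2] at h1
      have h3 : 0 < ‖v‖ := norm_pos_iff.mpr h
      nlinarith
  refine this.trans (le_of_eq ?_)
  rw [intervalIntegral.integral_const_mul, integral_id]
  rw [show ((1:ℝ)^2 - 0^2)/2 = 1/2 by norm_num]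
  ring

/-- For `f, F : ℝ^d → ℝ` differentiable with `L_f`- resp.
`L_F`-Lipschitz gradients and `L_F ≤ L_f`, for every `x, u ∈ ℝ^d` and `ν > 0`,
`((f(x+νu) − f(x))/ν − (F(x+νu) − F(x))/ν)² ≤ 2‖∇f(x) − ∇F(x)‖²‖u‖² + 2L_f²ν²‖u‖⁴`. -/
theorem directional_difference_error_bound
    {d : ℕ} (f F : EuclideanSpace ℝ (Fin d) → ℝ) (Lf LF : ℝ)
    (hf : Differentiable ℝ f) (hF : Differentiable ℝ F)
    (hLf : ∀ x y, ‖gradient f x - gradient f y‖ ≤ Lf * ‖x - y‖)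
    (hLF : ∀ x y, ‖gradient F x - gradient F y‖ ≤ LF * ‖x - y‖)
    (hLL : LF ≤ Lf)
    (x u : EuclideanSpace ℝ (Fin d)) (ν : ℝ) (hν : 0 < ν) :
    ((f (x + ν • u) - f x) / ν - (F (x + ν • u) - F x) / ν) ^ 2
      ≤ 2 * ‖gradient f x - gradient F x‖ ^ 2 * ‖u‖ ^ 2
        + 2 * Lf ^ 2 * ν ^ 2 * ‖u‖ ^ 4 := by
  set g : EuclideanSpace ℝ (Fin d) → ℝ := fun y => f y - F y with hg_def
  have hgrad : ∀ y, HasGradientAt g (gradient f y - gradient F y) y := by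
    intro y
    rw [hasGradientAt_iff_hasFDerivAt, map_sub]
    exact ((hf y).hasGradientAt.hasFDerivAt).sub ((hF y).hasGradientAt.hasFDerivAt)
  have hgradeq : ∀ y, gradient g y = gradient f y - gradient F y :=
    fun y => (hgrad y).gradient
  have hgdiff : Differentiable ℝ g := hf.sub hF
  have hgL : ∀ a b, ‖gradient g a - gradient g b‖ ≤ (Lf + LF) * ‖a - b‖ := by
    intro a b
    rw [hgradeq a, hgradeq b]
    calc ‖(gradient f a - gradient F a) - (gradient f b - gradient F b)‖
        = ‖(gradient f a - gradient f b) - (gradient F a - gradient F b)‖ := by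
          rw [sub_sub_sub_comm]
      _ ≤ ‖gradient f a - gradient f b‖ + ‖gradient F a - gradient F b‖ := norm_sub_le _ _
      _ ≤ Lf * ‖a - b‖ + LF * ‖a - b‖ := add_le_add (hLf a b) (hLF a b)
      _ = (Lf + LF) * ‖a - b‖ := by ring
  have key := taylor_quadratic_bound g (Lf + LF) hgdiff hgL x (ν • u)
  rw [hgradeq x] at key
  set G := gradient f x - gradient F x
  have hinner : (inner ℝ G (ν • u) : ℝ) = ν * inner ℝ G u := real_inner_smul_right G u ν
  have hnv : ‖ν • u‖ ^ 2 = ν ^ 2 * ‖u‖ ^ 2 := by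
    rw [norm_smul, Real.norm_eq_abs, mul_pow, sq_abs]
  set D := (f (x + ν • u) - f x) / ν - (F (x + ν • u) - F x) / ν with hD
  have hDg : D = (g (x + ν • u) - g x) / ν := by rw [hD, hg_def]; ring
  set a := (inner ℝ G u : ℝ)
  have hr : |D - a| ≤ Lf * ν * ‖u‖ ^ 2 := by
    have : D - a = (g (x + ν • u) - g x - inner ℝ G (ν • u)) / ν := by
      rw [hDg, hinner]; field_simp
    rw [this, abs_div, abs_of_pos hν, div_le_iff₀ hν]
    refine key.trans ?_
    rw [hnv]
    nlinarith [sq_nonneg ν, sq_nonneg ‖u‖, mul_pos hν hν]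
  have ha : a ^ 2 ≤ ‖G‖ ^ 2 * ‖u‖ ^ 2 := by
    have := abs_real_inner_le_norm G u
    nlinarith [abs_nonneg (inner ℝ G u : ℝ), sq_abs (inner ℝ G u : ℝ)]
  have hr2 : (D - a) ^ 2 ≤ Lf ^ 2 * ν ^ 2 * ‖u‖ ^ 4 := by
    have h1 : (D - a) ^ 2 = |D - a| ^ 2 := (sq_abs _).symm
    nlinarith [abs_nonneg (D - a), sq_abs (D - a)]
  nlinarith [sq_nonneg (D - a - a), sq_nonneg (a - (D - a))]
end

section
/- Let d ≥ 1, let 1 ≤ N ≤ d, and let v ∈ ℝ^d. Averaging uniformly over all subsets T of {1,…,d} of cardinality N, the variance of the randomized coordinate estimator satisfies the exact identity (1 / C(d,N)) · Σ_{T ⊆ {1,…,d}, |T| = N} ‖ (d/N)·[v]_T − v ‖² = ((d − N)/N) · ‖v‖², where C(d,N) is the binomial coefficient. -/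
open Finset

/-- `[v]_T`: the vector whose `j`-th coordinate is `v j` if `j ∈ T` and `0` otherwise. -/
noncomputable def restrictCoords {d : ℕ} (T : Finset (Fin d))
    (v : EuclideanSpace ℝ (Fin d)) : EuclideanSpace ℝ (Fin d) :=
  (WithLp.equiv 2 (Fin d → ℝ)).symm fun j => if j ∈ T then v j else 0

lemma normsq_eq {d : ℕ} (x : EuclideanSpace ℝ (Fin d)) : ‖x‖^2 = ∑ j, (x j)^2 := by
  rw [EuclideanSpace.norm_eq, Real.sq_sqrt (by positivity)]
  simp [sq_abs]

lemma count_mem {d N : ℕ} (hN1 : 1 ≤ N) (j : Fin d) :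
    ((Finset.powersetCard N (Finset.univ : Finset (Fin d))).filter (fun T => j ∈ T)).card
      = (d-1).choose (N-1) := by
  have : ((Finset.powersetCard N (Finset.univ : Finset (Fin d))).filter (fun T => j ∈ T)).card
      = (Finset.powersetCard (N-1) ((Finset.univ : Finset (Fin d)).erase j)).card := by
    refine Finset.card_bij' (fun T _ => T.erase j) (fun S _ => insert j S) ?_ ?_ ?_ ?_
    · intro T hT
      simp only [mem_filter, mem_powersetCard] at hT
      simp only [mem_powersetCard]
      constructor
      · intro x hx
        exact Finset.mem_erase.2 ⟨(Finset.mem_erase.1 hx).1, Finset.mem_univ _⟩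
      · rw [Finset.card_erase_of_mem hT.2, hT.1.2]
    · intro S hS
      simp only [mem_powersetCard] at hS
      have hjS : j ∉ S := fun h => (Finset.mem_erase.1 (hS.1 h)).1 rfl
      simp only [mem_filter, mem_powersetCard]
      refine ⟨⟨Finset.subset_univ _, ?_⟩, Finset.mem_insert_self _ _⟩
      rw [Finset.card_insert_of_notMem hjS, hS.2]
      omega
    · intro T hT
      simp only [mem_filter] at hT
      exact Finset.insert_erase hT.2
    · intro S hS
      simp only [mem_powersetCard] at hS
      have hjS : j ∉ S := fun h => (Finset.mem_erase.1 (hS.1 h)).1 rfl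
      exact Finset.erase_insert hjS
  rw [this, Finset.card_powersetCard, Finset.card_erase_of_mem (Finset.mem_univ j),
    Finset.card_univ, Fintype.card_fin]

/-- For `1 ≤ N ≤ d` and `v ∈ ℝ^d`, averaging uniformly over all subsets
`T ⊆ {1,…,d}` with `|T| = N`, the randomized coordinate estimator's variance satisfies
`(1/C(d,N)) ∑_{|T|=N} ‖(d/N)[v]_T − v‖² = ((d − N)/N)‖v‖²`. -/
theorem randomized_coordinate_variance
    {d N : ℕ} (hd : 1 ≤ d) (hN1 : 1 ≤ N) (hNd : N ≤ d)
    (v : EuclideanSpace ℝ (Fin d)) :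
    ((d.choose N : ℝ))⁻¹ *
        ∑ T ∈ Finset.powersetCard N (Finset.univ : Finset (Fin d)),
          ‖((d : ℝ) / (N : ℝ)) • restrictCoords T v - v‖ ^ 2
      = (((d : ℝ) - (N : ℝ)) / (N : ℝ)) * ‖v‖ ^ 2 := by
  set c : ℝ := (d : ℝ) / (N : ℝ) with hc
  set P := Finset.powersetCard N (Finset.univ : Finset (Fin d)) with hP
  have hNR : (N : ℝ) ≠ 0 := by positivity
  have hdR : (d : ℝ) ≠ 0 := by positivity
  have hcb : (0 : ℝ) < (d.choose N : ℝ) := by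
    exact_mod_cast Nat.choose_pos hNd
  -- identity : N * C(d,N) = d * C(d-1,N-1)
  have hid : (N : ℝ) * (d.choose N : ℝ) = (d : ℝ) * ((d-1).choose (N-1) : ℝ) := by
    have h := Nat.add_one_mul_choose_eq (d-1) (N-1)
    have h1 : d-1+1 = d := by omega
    have h2 : N-1+1 = N := by omega
    rw [h1, h2] at h
    -- h : d * (d-1).choose (N-1) = d.choose N * N
    have := congrArg (Nat.cast (R := ℝ)) h
    push_cast at this
    linarith
  -- expand norms coordinatewise
  have hentry : ∀ (T : Finset (Fin d)),
      ‖c • restrictCoords T v - v‖ ^ 2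
        = ∑ j, (if j ∈ T then ((c - 1) * v j)^2 else (v j)^2) := by
    intro T
    rw [normsq_eq]
    refine Finset.sum_congr rfl fun j _ => ?_
    have : (c • restrictCoords T v - v) j = c * (if j ∈ T then v j else 0) - v j := rfl
    rw [this]
    by_cases h : j ∈ T <;> simp [h] <;> ring
  have hsum : ∑ T ∈ P, ‖c • restrictCoords T v - v‖ ^ 2
      = ∑ j, ((d.choose N : ℝ) * (v j)^2
          + ((d-1).choose (N-1) : ℝ) * (((c-1) * v j)^2 - (v j)^2)) := by
    rw [Finset.sum_congr rfl fun T _ => hentry T, Finset.sum_comm]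
    refine Finset.sum_congr rfl fun j _ => ?_
    have : ∀ T : Finset (Fin d),
        (if j ∈ T then ((c - 1) * v j)^2 else (v j)^2)
          = (v j)^2 + (if j ∈ T then ((c-1) * v j)^2 - (v j)^2 else 0) := by
      intro T; by_cases h : j ∈ T <;> simp [h]
    rw [Finset.sum_congr rfl fun T _ => this T, Finset.sum_add_distrib,
      Finset.sum_const, ← Finset.sum_filter, Finset.sum_const]
    rw [hP, Finset.card_powersetCard, Finset.card_univ, Fintype.card_fin,
      count_mem hN1 j, nsmul_eq_mul, nsmul_eq_mul]
  rw [hsum, normsq_eq, Finset.mul_sum, Finset.mul_sum]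
  refine Finset.sum_congr rfl fun j _ => ?_
  have key : ((d.choose N : ℝ))⁻¹ * ((d.choose N : ℝ)
      + ((d-1).choose (N-1) : ℝ) * ((c-1)^2 - 1)) = ((d:ℝ) - N) / N := by
    have hcb1 : ((d-1).choose (N-1) : ℝ) = (N : ℝ) * (d.choose N : ℝ) / d := by
      field_simp at hid ⊢; linarith
    rw [hcb1, hc]
    field_simp
    ring
  calc ((d.choose N : ℝ))⁻¹ * ((d.choose N : ℝ) * (v j)^2
          + ((d-1).choose (N-1) : ℝ) * (((c-1) * v j)^2 - (v j)^2))
      = ((d.choose N : ℝ))⁻¹ * ((d.choose N : ℝ)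
          + ((d-1).choose (N-1) : ℝ) * ((c-1)^2 - 1)) * (v j)^2 := by ring
    _ = (((d:ℝ) - N) / N) * (v j)^2 := by rw [key]
end

section
/- Let F : ℝ^d → ℝ be differentiable with L-Lipschitz gradient, let ν > 0, x ∈ ℝ^d, let u_1,…,u_d be an orthonormal basis of ℝ^d, and set b_j := (F(x + ν u_j) − F(x))/ν. For 1 ≤ N ≤ d, averaging uniformly over all subsets T of {1,…,d} of cardinality N: (1 / C(d,N)) · Σ_{|T| = N} ‖ (d/N)·Σ_{j ∈ T} b_j u_j ‖² = (d/N)·Σ_{j=1}^d b_j², and this quantity is at most (2d/N)·( L²·ν²·d/4 + ‖∇F(x)‖² ). -/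
open Finset

lemma descent {E : Type*} [NormedAddCommGroup E] [InnerProductSpace ℝ E] [CompleteSpace E]
    (F : E → ℝ) (L : ℝ) (hL : 0 ≤ L) (hF : Differentiable ℝ F)
    (hLip : ∀ x y, ‖gradient F x - gradient F y‖ ≤ L * ‖x - y‖)
    (x v : E) :
    |F (x + v) - F x - (inner ℝ (gradient F x) v : ℝ)| ≤ L * ‖v‖ ^ 2 / 2 := by
  set g := gradient F with hg
  have hFd : ∀ y, HasFDerivAt F (InnerProductSpace.toDual ℝ E (g y)) y :=
    fun y => (hF y).hasGradientAt.hasFDerivAt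
  have hpath : ∀ t : ℝ, HasDerivAt (fun t : ℝ => x + t • v) v t := by
    intro t
    simpa using ((hasDerivAt_id t).smul_const v).const_add x
  have hφ : ∀ t : ℝ, HasDerivAt (fun t : ℝ => F (x + t • v))
      ((inner ℝ (g (x + t • v)) v : ℝ)) t := by
    intro t
    have := (hFd (x + t • v)).comp_hasDerivAt t (hpath t)
    simp at this
    exact this
  set f : ℝ → ℝ := fun t => F (x + t • v) - F x - t * (inner ℝ (g x) v : ℝ) with hfdef
  have hf : ∀ t : ℝ, HasDerivAt f ((inner ℝ (g (x + t • v)) v : ℝ) - (inner ℝ (g x) v : ℝ)) t := by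
    intro t
    have := ((hφ t).sub_const (F x)).sub ((hasDerivAt_id t).mul_const (inner ℝ (g x) v : ℝ))
    simp only [one_mul] at this
    exact this
  set B : ℝ → ℝ := fun t => L * ‖v‖ ^ 2 / 2 * t ^ 2 with hBdef
  have hB : ∀ t : ℝ, HasDerivAt B (L * ‖v‖ ^ 2 * t) t := by
    intro t
    have h := (hasDerivAt_pow 2 t).const_mul (L * ‖v‖ ^ 2 / 2)
    exact h.congr_deriv (by ring)
  have key : ∀ t ∈ Set.Icc (0:ℝ) 1, ‖f t‖ ≤ B t := by
    apply image_norm_le_of_norm_deriv_right_le_deriv_boundary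
      (f' := fun t => (inner ℝ (g (x + t • v)) v : ℝ) - (inner ℝ (g x) v : ℝ))
    · exact (continuous_iff_continuousAt.2 fun t => (hf t).continuousAt).continuousOn
    · exact fun t _ => (hf t).hasDerivWithinAt
    · simp [hfdef, hBdef]
    · exact hB
    · intro t ht
      have h1 : (inner ℝ (g (x + t • v)) v : ℝ) - (inner ℝ (g x) v : ℝ)
          = (inner ℝ (g (x + t • v) - g x) v : ℝ) := by rw [inner_sub_left]
      rw [Real.norm_eq_abs, h1]
      calc |(inner ℝ (g (x + t • v) - g x) v : ℝ)| ≤ ‖g (x + t • v) - g x‖ * ‖v‖ :=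
            abs_real_inner_le_norm _ _
        _ ≤ (L * ‖x + t • v - x‖) * ‖v‖ :=
            mul_le_mul_of_nonneg_right (hLip _ _) (norm_nonneg _)
        _ ≤ L * ‖v‖ ^ 2 * t := by
            have : ‖x + t • v - x‖ = t * ‖v‖ := by
              simp [norm_smul, abs_of_nonneg ht.1]
            rw [this]; ring_nf; nlinarith [norm_nonneg v, ht.1]
  have h1 := key 1 (by norm_num)
  simpa [hfdef, hBdef, Real.norm_eq_abs] using h1

lemma count_containing {d N : ℕ} (hN1 : 1 ≤ N) (j : Fin d) :
    ((Finset.powersetCard N (Finset.univ : Finset (Fin d))).filter (fun T => j ∈ T)).card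
      = (d - 1).choose (N - 1) := by
  classical
  have : ((Finset.powersetCard N (Finset.univ : Finset (Fin d))).filter (fun T => j ∈ T)).card
      = (Finset.powersetCard (N - 1) ((Finset.univ : Finset (Fin d)).erase j)).card := by
    apply Finset.card_bij' (fun T _ => T.erase j) (fun S _ => insert j S)
    · intro T hT
      simp only [mem_filter] at hT
      exact Finset.insert_erase hT.2
    · intro S hS
      simp only [Finset.mem_powersetCard] at hS
      have hj : j ∉ S := fun h => (Finset.mem_erase.1 (hS.1 h)).1 rfl
      exact Finset.erase_insert hj
    · intro T hT
      simp only [mem_filter, Finset.mem_powersetCard] at hT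
      simp only [Finset.mem_powersetCard]
      constructor
      · exact fun a ha => Finset.mem_erase.2 ⟨(Finset.mem_erase.1 ha).1, Finset.mem_univ a⟩
      · rw [Finset.card_erase_of_mem hT.2, hT.1.2]
    · intro S hS
      simp only [Finset.mem_powersetCard] at hS
      have hj : j ∉ S := fun h => (Finset.mem_erase.1 (hS.1 h)).1 rfl
      simp only [mem_filter, Finset.mem_powersetCard]
      refine ⟨⟨fun a _ => Finset.mem_univ a, ?_⟩, Finset.mem_insert_self _ _⟩
      rw [Finset.card_insert_of_notMem hj, hS.2]
      omega
  rw [this, Finset.card_powersetCard, Finset.card_erase_of_mem (Finset.mem_univ j),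
    Finset.card_univ, Fintype.card_fin]

lemma sum_over_subsets {d N : ℕ} (c : Fin d → ℝ) (hN1 : 1 ≤ N) :
    ∑ T ∈ Finset.powersetCard N (Finset.univ : Finset (Fin d)), ∑ j ∈ T, c j
      = ((d - 1).choose (N - 1) : ℝ) * ∑ j, c j := by
  classical
  have : ∀ T ∈ Finset.powersetCard N (Finset.univ : Finset (Fin d)),
      ∑ j ∈ T, c j = ∑ j : Fin d, if j ∈ T then c j else 0 := by
    intro T _
    rw [Finset.sum_ite_mem, Finset.univ_inter]
  rw [Finset.sum_congr rfl this, Finset.sum_comm]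
  rw [Finset.mul_sum]
  congr 1
  ext j
  rw [← Finset.sum_filter, ← count_containing hN1 j]
  simp [Finset.sum_const, mul_comm]

lemma norm_sq_sum_orthonormal {d : ℕ} (u : OrthonormalBasis (Fin d) ℝ (EuclideanSpace ℝ (Fin d)))
    (b : Fin d → ℝ) (T : Finset (Fin d)) :
    ‖∑ j ∈ T, b j • u j‖ ^ 2 = ∑ j ∈ T, b j ^ 2 := by
  classical
  rw [← real_inner_self_eq_norm_sq, sum_inner]
  have hu := orthonormal_iff_ite.mp u.orthonormal
  refine Finset.sum_congr rfl fun i hi => ?_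
  rw [inner_sum]
  simp only [real_inner_smul_left, real_inner_smul_right, hu, mul_ite, mul_one, mul_zero,
    Finset.sum_ite_eq, hi, if_true, pow_two]

lemma sum_inner_sq {d : ℕ} (u : OrthonormalBasis (Fin d) ℝ (EuclideanSpace ℝ (Fin d)))
    (g : EuclideanSpace ℝ (Fin d)) :
    ∑ j, (inner ℝ g (u j) : ℝ) ^ 2 = ‖g‖ ^ 2 := by
  have h := u.sum_inner_mul_inner g g
  rw [← real_inner_self_eq_norm_sq, ← h]
  congr 1
  ext j
  rw [pow_two, real_inner_comm (u j) g]


/-- (Second moment of the randomized subspace estimator.) Let `F` have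
`L`-Lipschitz gradient, `ν > 0`, `u` an orthonormal basis of `ℝ^d`, and
`bⱼ := (F(x + ν uⱼ) − F(x))/ν`. For `1 ≤ N ≤ d`, averaging uniformly over all subsets
`T ⊆ {1,…,d}` with `|T| = N`:
`(1/C(d,N)) ∑_{|T|=N} ‖(d/N) ∑_{j∈T} bⱼ uⱼ‖² = (d/N) ∑ⱼ bⱼ²`, and this is at most
`(2d/N)(L²ν²d/4 + ‖∇F(x)‖²)`. -/
theorem randomized_subspace_second_moment
    {d N : ℕ} (hd : 1 ≤ d) (hN1 : 1 ≤ N) (hNd : N ≤ d)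
    (F : EuclideanSpace ℝ (Fin d) → ℝ) (L ν : ℝ)
    (hF : Differentiable ℝ F)
    (hLip : ∀ x y, ‖gradient F x - gradient F y‖ ≤ L * ‖x - y‖)
    (hν : 0 < ν) (x : EuclideanSpace ℝ (Fin d))
    (u : OrthonormalBasis (Fin d) ℝ (EuclideanSpace ℝ (Fin d))) :
    ((d.choose N : ℝ))⁻¹ *
        ∑ T ∈ Finset.powersetCard N (Finset.univ : Finset (Fin d)),
          ‖((d : ℝ) / (N : ℝ)) • ∑ j ∈ T, ((F (x + ν • u j) - F x) / ν) • u j‖ ^ 2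
        = ((d : ℝ) / (N : ℝ)) * ∑ j, ((F (x + ν • u j) - F x) / ν) ^ 2 ∧
      ((d : ℝ) / (N : ℝ)) * ∑ j, ((F (x + ν • u j) - F x) / ν) ^ 2
        ≤ (2 * (d : ℝ) / (N : ℝ)) *
            (L ^ 2 * ν ^ 2 * (d : ℝ) / 4 + ‖gradient F x‖ ^ 2) := by
  classical
  set b : Fin d → ℝ := fun j => (F (x + ν • u j) - F x) / ν with hb
  have hNpos : (0:ℝ) < N := by exact_mod_cast hN1
  have hdpos : (0:ℝ) < d := by exact_mod_cast hd
  have hC : (0:ℝ) < (d.choose N : ℝ) := by exact_mod_cast Nat.choose_pos hNd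
  constructor
  · -- equality part
    have hstep : ∀ T ∈ Finset.powersetCard N (Finset.univ : Finset (Fin d)),
        ‖((d : ℝ) / (N : ℝ)) • ∑ j ∈ T, b j • u j‖ ^ 2
          = ((d : ℝ) / (N : ℝ)) ^ 2 * ∑ j ∈ T, b j ^ 2 := by
      intro T _
      rw [norm_smul, mul_pow, norm_sq_sum_orthonormal u b T, Real.norm_eq_abs, sq_abs]
    rw [Finset.sum_congr rfl hstep, ← Finset.mul_sum, sum_over_subsets (fun j => b j ^ 2) hN1]
    have natkey : d * (d - 1).choose (N - 1) = d.choose N * N := by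
      have h1 := Nat.add_one_mul_choose_eq (d - 1) (N - 1)
      have h2 : d - 1 + 1 = d := by omega
      have h3 : N - 1 + 1 = N := by omega
      rw [h2, h3] at h1
      exact h1
    have keyR : (d : ℝ) * ((d - 1).choose (N - 1) : ℝ) = (d.choose N : ℝ) * N := by
      exact_mod_cast natkey
    set S : ℝ := ∑ j, b j ^ 2
    have hratio : ((d.choose N : ℝ))⁻¹ * ((d : ℝ) / N) ^ 2 * (((d - 1).choose (N - 1) : ℕ) : ℝ)
        = (d : ℝ) / N := by
      rw [div_pow]
      field_simp
      linear_combination keyR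
    calc ((d.choose N : ℝ))⁻¹ * (((d : ℝ) / N) ^ 2 * ((((d - 1).choose (N - 1) : ℕ) : ℝ) * S))
        = (((d.choose N : ℝ))⁻¹ * ((d : ℝ) / N) ^ 2 * (((d - 1).choose (N - 1) : ℕ) : ℝ)) * S := by
          ring
      _ = (d : ℝ) / N * S := by rw [hratio]
  · -- inequality part
    set g := gradient F x with hg
    have hL : 0 ≤ L := by
      have h := hLip x (x + ν • u ⟨0, hd⟩)
      have hnorm : ‖x - (x + ν • u ⟨0, hd⟩)‖ = ν := by
        simp [norm_smul, abs_of_pos hν, u.orthonormal.1]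
      rw [hnorm] at h
      have h0 := le_trans (norm_nonneg _) h
      exact (mul_nonneg_iff_of_pos_right hν).1 h0
    have hbound : ∀ j, |b j - (inner ℝ g (u j) : ℝ)| ≤ L * ν / 2 := by
      intro j
      have h := descent F L hL hF hLip x (ν • u j)
      have hnv : ‖ν • u j‖ = ν := by simp [norm_smul, abs_of_pos hν, u.orthonormal.1]
      have hin : (inner ℝ (gradient F x) (ν • u j) : ℝ) = ν * (inner ℝ g (u j) : ℝ) :=
        real_inner_smul_right _ _ _
      rw [hnv, hin] at h
      have heq : b j - (inner ℝ g (u j) : ℝ)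
          = (F (x + ν • u j) - F x - ν * (inner ℝ g (u j) : ℝ)) / ν := by
        rw [hb]; field_simp
      rw [heq, abs_div, abs_of_pos hν, div_le_iff₀ hν]
      nlinarith [h]
    have hsum : ∑ j, b j ^ 2 ≤ (d : ℝ) * (L ^ 2 * ν ^ 2 / 2) + 2 * ‖g‖ ^ 2 := by
      have hj : ∀ j, b j ^ 2 ≤ L ^ 2 * ν ^ 2 / 2 + 2 * (inner ℝ g (u j) : ℝ) ^ 2 := by
        intro j
        have h2 := abs_le.1 (hbound j)
        have h3 : (b j - (inner ℝ g (u j) : ℝ)) ^ 2 ≤ (L * ν / 2) ^ 2 := sq_le_sq' h2.1 h2.2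
        nlinarith [h3, sq_nonneg ((inner ℝ g (u j) : ℝ) - (b j - (inner ℝ g (u j) : ℝ)))]
      calc ∑ j, b j ^ 2 ≤ ∑ j, (L ^ 2 * ν ^ 2 / 2 + 2 * (inner ℝ g (u j) : ℝ) ^ 2) :=
            Finset.sum_le_sum fun j _ => hj j
        _ = (d : ℝ) * (L ^ 2 * ν ^ 2 / 2) + 2 * ∑ j, (inner ℝ g (u j) : ℝ) ^ 2 := by
            rw [Finset.sum_add_distrib, Finset.sum_const, Finset.card_univ, Fintype.card_fin,
              ← Finset.mul_sum]
            simp [nsmul_eq_mul]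
        _ = (d : ℝ) * (L ^ 2 * ν ^ 2 / 2) + 2 * ‖g‖ ^ 2 := by rw [sum_inner_sq u g]
    have h0 : (0:ℝ) ≤ (d : ℝ) / N := by positivity
    calc ((d : ℝ) / N) * ∑ j, b j ^ 2
        ≤ ((d : ℝ) / N) * ((d : ℝ) * (L ^ 2 * ν ^ 2 / 2) + 2 * ‖g‖ ^ 2) :=
          mul_le_mul_of_nonneg_left hsum h0
      _ = (2 * (d : ℝ) / N) * (L ^ 2 * ν ^ 2 * (d : ℝ) / 4 + ‖g‖ ^ 2) := by
          field_simp
          ring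
end
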